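/- For n ≥ 2 and d = 2, with u = n+1 and λ^i, ν, m_λ as above: m_λ ≠ 0 if and only if either (a) ν_{λ^n} = 1 and ν_{λ^j} = 0 for all j < n, in which case m_λ = 1, or (b) ν_{λ^1} = 1 and ν_{λ^j} = 0 for all j > 1, in which case m_λ = (-1)^{n-1}. Moreover case (a) holds if and only if λ_{n-1} ≥ n, λ_i - n is even for all i ≤ n-1, and λ_n ≤ n-1 or λ_n - n is even; case (b) holds if and only if λ_n ≥ n+1 and λ_i - n - 1 is even for all i. -/

import Mathlib

/-- For a weight `l = (l_1 ≥ ⋯ ≥ l_n)` and `1 ≤ i ≤ n`, the weight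
`l^i = (l_1+1-u, …, l_{i-1}+1-u, l_{i+1}-u, …, l_n-u) ∈ ℤ^{n-1}` (0-indexed here). -/
def lamb (n : ℕ) (u : ℤ) (l : Fin n → ℤ) (i : Fin n) : Fin (n - 1) → ℤ :=
  fun j =>
    if (j : ℕ) < (i : ℕ) then l ⟨j, by have := j.isLt; omega⟩ + 1 - u
    else l ⟨(j : ℕ) + 1, by have := j.isLt; omega⟩ - u

open scoped Classical in
/-- `ν_μ = 1` if `μ` is weakly decreasing with all entries nonnegative and even,
and `ν_μ = 0` otherwise (the `d = 2` stable plethysm multiplicity). -/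
noncomputable def nu {m : ℕ} (μ : Fin m → ℤ) : ℕ :=
  if Antitone μ ∧ ∀ j, 0 ≤ μ j ∧ Even (μ j) then 1 else 0

/-- `m_λ = ∑_{i=1}^n (-1)^{n-i} ν_{λ^i}`, with `u = n+1` (the `d = 2` case). -/
noncomputable def mlam (n : ℕ) (l : Fin n → ℤ) : ℤ :=
  ∑ i : Fin n, (-1 : ℤ) ^ (n - 1 - (i : ℕ)) * nu (lamb n ((n : ℤ) + 1) l i)

/-- Case (a): `ν_{λ^n} = 1` and `ν_{λ^j} = 0` for all `j < n`. -/
noncomputable def caseA (n : ℕ) (hn : 2 ≤ n) (l : Fin n → ℤ) : Prop :=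
  nu (lamb n ((n : ℤ) + 1) l ⟨n - 1, by omega⟩) = 1 ∧
    ∀ j : Fin n, (j : ℕ) < n - 1 → nu (lamb n ((n : ℤ) + 1) l j) = 0

/-- Case (b): `ν_{λ^1} = 1` and `ν_{λ^j} = 0` for all `j > 1`. -/
noncomputable def caseB (n : ℕ) (hn : 2 ≤ n) (l : Fin n → ℤ) : Prop :=
  nu (lamb n ((n : ℤ) + 1) l ⟨0, by omega⟩) = 1 ∧
    ∀ j : Fin n, 0 < (j : ℕ) → nu (lamb n ((n : ℤ) + 1) l j) = 0

lemma nu01 {m : ℕ} (μ : Fin m → ℤ) : nu μ = 0 ∨ nu μ = 1 := by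
  unfold nu; split_ifs <;> simp

lemma nu_iff {m : ℕ} (μ : Fin m → ℤ) :
    nu μ = 1 ↔ (Antitone μ ∧ ∀ j, 0 ≤ μ j ∧ Even (μ j)) := by
  unfold nu; split_ifs with h <;> simp [h]

lemma lamb_lt (n : ℕ) (u : ℤ) (l : Fin n → ℤ) (i : Fin n) (j : ℕ) (hj : j < n - 1)
    (h : j < (i:ℕ)) (hj' : j < n) :
    lamb n u l i ⟨j, hj⟩ = l ⟨j, hj'⟩ + 1 - u := by
  simp [lamb, h]

lemma lamb_ge (n : ℕ) (u : ℤ) (l : Fin n → ℤ) (i : Fin n) (j : ℕ) (hj : j < n - 1)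
    (h : ¬ j < (i:ℕ)) (hj' : j + 1 < n) :
    lamb n u l i ⟨j, hj⟩ = l ⟨j + 1, hj'⟩ - u := by
  simp [lamb, h]

lemma nu_one_iff (n : ℕ) (hn : 2 ≤ n) (l : Fin n → ℤ) (hl : Antitone l) (i : Fin n) :
    nu (lamb n ((n:ℤ)+1) l i) = 1 ↔
      ((∀ j : Fin n, (j:ℕ) < (i:ℕ) → Even (l j - n)) ∧
       (∀ j : Fin n, (i:ℕ) < (j:ℕ) → Even (l j - (n:ℤ) - 1)) ∧
       (if (i:ℕ) = n - 1 then (n:ℤ) ≤ l ⟨n-2, by have _h := hn; omega⟩ else (n:ℤ)+1 ≤ l ⟨n-1, by have _h := hn; omega⟩)) := by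
  have hi := i.isLt
  rw [nu_iff]
  constructor
  · rintro ⟨hant, hall⟩
    refine ⟨?_, ?_, ?_⟩
    · intro j hj
      have hj1 : (j:ℕ) < n - 1 := by have := i.isLt; omega
      have h := (hall ⟨j, hj1⟩).2
      rw [lamb_lt n _ l i j hj1 hj j.isLt] at h
      have e : l j - (n:ℤ) = l ⟨(j:ℕ), j.isLt⟩ + 1 - ((n:ℤ)+1) := by ring_nf
      rw [e]; exact h
    · intro j hj
      have hj0 : 1 ≤ (j:ℕ) := by omega
      have hj1 : (j:ℕ) - 1 < n - 1 := by have := j.isLt; omega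
      have h := (hall ⟨(j:ℕ) - 1, hj1⟩).2
      rw [lamb_ge n _ l i ((j:ℕ)-1) hj1 (by omega) (by omega)] at h
      have e2 : (⟨(j:ℕ)-1+1, by omega⟩ : Fin n) = j := by ext; simp; omega
      rw [e2] at h
      have e : l j - (n:ℤ) - 1 = l j - ((n:ℤ)+1) := by ring
      rw [e]; exact h
    · by_cases hc : (i:ℕ) = n - 1
      · rw [if_pos hc]
        have hj1 : n - 2 < n - 1 := by omega
        have h := (hall ⟨n-2, hj1⟩).1
        rw [lamb_lt n _ l i (n-2) hj1 (by omega) (by omega)] at h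
        omega
      · rw [if_neg hc]
        have hj1 : n - 2 < n - 1 := by omega
        have h := (hall ⟨n-2, hj1⟩).1
        rw [lamb_ge n _ l i (n-2) hj1 (by omega) (by omega)] at h
        have e2 : (⟨n-2+1, by omega⟩ : Fin n) = ⟨n-1, by omega⟩ := by ext; simp; omega
        rw [e2] at h
        omega
  · rintro ⟨h1, h2, h3⟩
    have hlast : ((i:ℕ) = n - 1 ∧ (n:ℤ) ≤ l ⟨n-2, by omega⟩) ∨ ((i:ℕ) < n - 1 ∧ (n:ℤ)+1 ≤ l ⟨n-1, by omega⟩) := by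
      by_cases hc : (i:ℕ) = n - 1
      · left; rw [if_pos hc] at h3; exact ⟨hc, h3⟩
      · right; rw [if_neg hc] at h3; exact ⟨by omega, h3⟩
    constructor
    · intro a b hab
      have hab' : (a:ℕ) ≤ (b:ℕ) := hab
      have ha := a.isLt; have hb := b.isLt
      by_cases hbi : (b:ℕ) < (i:ℕ)
      · have hai : (a:ℕ) < (i:ℕ) := by omega
        rw [show a = (⟨(a:ℕ), a.isLt⟩ : Fin (n-1)) from rfl,
            show b = (⟨(b:ℕ), b.isLt⟩ : Fin (n-1)) from rfl,
            lamb_lt n _ l i a a.isLt hai (by omega),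
            lamb_lt n _ l i b b.isLt hbi (by omega)]
        have := hl (show (⟨(a:ℕ), by omega⟩ : Fin n) ≤ ⟨(b:ℕ), by omega⟩ from by
          simp only [Fin.mk_le_mk]; omega)
        omega
      · by_cases hai : (a:ℕ) < (i:ℕ)
        · rw [show a = (⟨(a:ℕ), a.isLt⟩ : Fin (n-1)) from rfl,
              show b = (⟨(b:ℕ), b.isLt⟩ : Fin (n-1)) from rfl,
              lamb_lt n _ l i a a.isLt hai (by omega),
              lamb_ge n _ l i b b.isLt hbi (by omega)]
          have := hl (show (⟨(a:ℕ), by omega⟩ : Fin n) ≤ ⟨(b:ℕ)+1, by omega⟩ from by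
            simp only [Fin.mk_le_mk]; omega)
          omega
        · rw [show a = (⟨(a:ℕ), a.isLt⟩ : Fin (n-1)) from rfl,
              show b = (⟨(b:ℕ), b.isLt⟩ : Fin (n-1)) from rfl,
              lamb_ge n _ l i a a.isLt hai (by omega),
              lamb_ge n _ l i b b.isLt hbi (by omega)]
          have := hl (show (⟨(a:ℕ)+1, by omega⟩ : Fin n) ≤ ⟨(b:ℕ)+1, by omega⟩ from by
            simp only [Fin.mk_le_mk]; omega)
          omega
    · intro j
      have hj := j.isLt
      by_cases hji : (j:ℕ) < (i:ℕ)
      · rw [show j = (⟨(j:ℕ), j.isLt⟩ : Fin (n-1)) from rfl,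
            lamb_lt n _ l i j j.isLt hji (by omega)]
        constructor
        · rcases hlast with ⟨hc, hb⟩ | ⟨hc, hb⟩
          · have := hl (show (⟨(j:ℕ), by omega⟩ : Fin n) ≤ ⟨n-2, by omega⟩ from by
              simp only [Fin.mk_le_mk]; omega)
            omega
          · have := hl (show (⟨(j:ℕ), by omega⟩ : Fin n) ≤ ⟨n-1, by omega⟩ from by
              simp only [Fin.mk_le_mk]; omega)
            omega
        · have h := h1 ⟨(j:ℕ), by omega⟩ hji
          have e : l ⟨(j:ℕ), by omega⟩ + 1 - ((n:ℤ)+1) = l ⟨(j:ℕ), by omega⟩ - (n:ℤ) := by ring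
          rw [e]; exact h
      · rw [show j = (⟨(j:ℕ), j.isLt⟩ : Fin (n-1)) from rfl,
            lamb_ge n _ l i j j.isLt hji (by omega)]
        constructor
        · rcases hlast with ⟨hc, hb⟩ | ⟨hc, hb⟩
          · omega
          · have := hl (show (⟨(j:ℕ)+1, by omega⟩ : Fin n) ≤ ⟨n-1, by omega⟩ from by
              simp only [Fin.mk_le_mk]; omega)
            omega
        · have h := h2 ⟨(j:ℕ)+1, by omega⟩ (by simp only [Fin.val_mk]; omega)
          have e : l ⟨(j:ℕ)+1, by omega⟩ - ((n:ℤ)+1) = l ⟨(j:ℕ)+1, by omega⟩ - (n:ℤ) - 1 := by ring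
          rw [e]; exact h

lemma F1 (n : ℕ) (hn : 2 ≤ n) (l : Fin n → ℤ) (hl : Antitone l) (i k : Fin n)
    (hik : (i:ℕ) < (k:ℕ)) (hi : nu (lamb n ((n:ℤ)+1) l i) = 1)
    (hk : nu (lamb n ((n:ℤ)+1) l k) = 1) : (k:ℕ) = (i:ℕ) + 1 := by
  by_contra hne
  have hk2 := k.isLt
  have hmid : (i:ℕ) + 1 < (k:ℕ) := by omega
  have h1 := ((nu_one_iff n hn l hl i).mp hi).2.1 ⟨(i:ℕ)+1, by omega⟩ (by simp)
  have h2 := ((nu_one_iff n hn l hl k).mp hk).1 ⟨(i:ℕ)+1, by omega⟩ (by simp; omega)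
  simp only [Int.even_iff] at h1 h2
  omega

lemma F2 (n : ℕ) (hn : 2 ≤ n) (l : Fin n → ℤ) (hl : Antitone l) (i : Fin n)
    (h0 : 0 < (i:ℕ)) (h1 : (i:ℕ) < n - 1) (hi : nu (lamb n ((n:ℤ)+1) l i) = 1) :
    nu (lamb n ((n:ℤ)+1) l ⟨(i:ℕ)-1, by omega⟩) = 1 ∨
      nu (lamb n ((n:ℤ)+1) l ⟨(i:ℕ)+1, by omega⟩) = 1 := by
  obtain ⟨hA, hB, hC⟩ := (nu_one_iff n hn l hl i).mp hi
  rw [if_neg (by omega)] at hC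
  by_cases hp : Even (l i - (n:ℤ))
  · right
    rw [nu_one_iff n hn l hl]
    refine ⟨?_, ?_, ?_⟩
    · intro j hj
      simp only [Fin.val_mk] at hj
      by_cases hji : (j:ℕ) < (i:ℕ)
      · exact hA j hji
      · have : j = i := by ext; omega
        rw [this]; exact hp
    · intro j hj
      simp only [Fin.val_mk] at hj
      exact hB j (by omega)
    · by_cases hc : (i:ℕ)+1 = n - 1
      · rw [if_pos (by simpa using hc)]
        have := hl (show (⟨n-2, by omega⟩ : Fin n) ≤ ⟨n-1, by omega⟩ from by
          simp only [Fin.mk_le_mk]; omega)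
        omega
      · rw [if_neg (by simpa using hc)]; exact hC
  · left
    have hp' : Even (l i - (n:ℤ) - 1) := by
      simp only [Int.even_iff] at hp ⊢; omega
    rw [nu_one_iff n hn l hl]
    refine ⟨?_, ?_, ?_⟩
    · intro j hj
      simp only [Fin.val_mk] at hj
      exact hA j (by omega)
    · intro j hj
      simp only [Fin.val_mk] at hj
      by_cases hji : (i:ℕ) < (j:ℕ)
      · exact hB j hji
      · have : j = i := by ext; omega
        rw [this]; exact hp'
    · rw [if_neg (by simp; omega)]; exact hC

lemma A_iff (n : ℕ) (hn : 2 ≤ n) (l : Fin n → ℤ) (hl : Antitone l) :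
    caseA n hn l ↔
      ((n : ℤ) ≤ l ⟨n - 2, by have _h := hn; omega⟩ ∧
        (∀ i : Fin n, (i : ℕ) < n - 1 → Even (l i - n)) ∧
        (l ⟨n - 1, by have _h := hn; omega⟩ ≤ (n : ℤ) - 1 ∨ Even (l ⟨n - 1, by have _h := hn; omega⟩ - n))) := by
  constructor
  · rintro ⟨hA1, hA2⟩
    obtain ⟨h1, h2, h3⟩ := (nu_one_iff n hn l hl ⟨n-1, by omega⟩).mp hA1
    rw [if_pos rfl] at h3
    refine ⟨h3, fun j hj => h1 j (by simpa using hj), ?_⟩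
    have hz := hA2 ⟨n-2, by omega⟩ (by simp; omega)
    by_contra hcon
    push_neg at hcon
    obtain ⟨hc1, hc2⟩ := hcon
    have hge : (n:ℤ) + 1 ≤ l ⟨n-1, by omega⟩ := by
      simp only [Int.even_iff] at hc2
      omega
    have : nu (lamb n ((n:ℤ)+1) l ⟨n-2, by omega⟩) = 1 := by
      rw [nu_one_iff n hn l hl]
      refine ⟨fun j hj => h1 j (by simp at hj ⊢; omega), ?_, ?_⟩
      · intro j hj
        simp only [Fin.val_mk] at hj
        have : j = (⟨n-1, by omega⟩ : Fin n) := by ext; simp; have := j.isLt; omega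
        rw [this]
        simp only [Int.even_iff] at hc2 ⊢
        omega
      · rw [if_neg (by simp; omega)]; exact hge
    omega
  · rintro ⟨h1, h2, h3⟩
    constructor
    · rw [nu_one_iff n hn l hl]
      refine ⟨fun j hj => h2 j (by simpa using hj), ?_, ?_⟩
      · intro j hj
        simp only [Fin.val_mk] at hj
        have := j.isLt; omega
      · rw [if_pos rfl]; exact h1
    · intro j hj
      rcases nu01 (lamb n ((n:ℤ)+1) l j) with h | h
      · exact h
      exfalso
      obtain ⟨g1, g2, g3⟩ := (nu_one_iff n hn l hl j).mp h
      rw [if_neg (by omega)] at g3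
      by_cases hc : (j:ℕ) < n - 2
      · have ha := g2 ⟨n-2, by omega⟩ (by simpa using hc)
        have hb := h2 ⟨n-2, by omega⟩ (by simp; omega)
        simp only [Int.even_iff] at ha hb
        omega
      · have hj2 : (j:ℕ) = n - 2 := by omega
        have ha := g2 ⟨n-1, by omega⟩ (by simp; omega)
        rcases h3 with h3 | h3
        · omega
        · simp only [Int.even_iff] at ha h3
          omega

lemma B_iff (n : ℕ) (hn : 2 ≤ n) (l : Fin n → ℤ) (hl : Antitone l) :
    caseB n hn l ↔
      ((n : ℤ) + 1 ≤ l ⟨n - 1, by have _h := hn; omega⟩ ∧ ∀ i : Fin n, Even (l i - n - 1)) := by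
  constructor
  · rintro ⟨hB1, hB2⟩
    obtain ⟨h1, h2, h3⟩ := (nu_one_iff n hn l hl ⟨0, by omega⟩).mp hB1
    rw [if_neg (by simp; omega)] at h3
    refine ⟨h3, ?_⟩
    have h0 : Even (l ⟨0, by omega⟩ - (n:ℤ) - 1) := by
      have hz := hB2 ⟨1, by omega⟩ (by simp)
      by_contra hcon
      have hp : Even (l ⟨0, by omega⟩ - (n:ℤ)) := by
        simp only [Int.even_iff] at hcon ⊢; omega
      have : nu (lamb n ((n:ℤ)+1) l ⟨1, by omega⟩) = 1 := by
        rw [nu_one_iff n hn l hl]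
        refine ⟨?_, ?_, ?_⟩
        · intro j hj
          simp only [Fin.val_mk] at hj
          have : j = (⟨0, by omega⟩ : Fin n) := by ext; simpa using hj
          rw [this]; exact hp
        · intro j hj
          simp only [Fin.val_mk] at hj
          exact h2 j (by simp only [Fin.val_mk]; omega)
        · by_cases hc : (1:ℕ) = n - 1
          · rw [if_pos (by simpa using hc)]
            have := hl (show (⟨n-2, by omega⟩ : Fin n) ≤ ⟨n-1, by omega⟩ from by
              simp only [Fin.mk_le_mk]; omega)
            omega
          · rw [if_neg (by simpa using hc)]; exact h3
      omega
    intro j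
    by_cases hj : (j:ℕ) = 0
    · have : j = (⟨0, by omega⟩ : Fin n) := by ext; simpa using hj
      rw [this]; exact h0
    · exact h2 j (by simpa using Nat.pos_of_ne_zero hj)
  · rintro ⟨h1, h2⟩
    constructor
    · rw [nu_one_iff n hn l hl]
      refine ⟨fun j hj => by simp at hj, fun j _ => h2 j, ?_⟩
      rw [if_neg (by simp; omega)]; exact h1
    · intro j hj
      rcases nu01 (lamb n ((n:ℤ)+1) l j) with h | h
      · exact h
      exfalso
      obtain ⟨g1, g2, g3⟩ := (nu_one_iff n hn l hl j).mp h
      have ha := g1 ⟨0, by omega⟩ (by simpa using hj)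
      have hb := h2 ⟨0, by omega⟩
      simp only [Int.even_iff] at ha hb
      omega

lemma mlam_A (n : ℕ) (hn : 2 ≤ n) (l : Fin n → ℤ) (hA : caseA n hn l) :
    mlam n l = 1 := by
  rw [mlam]
  rw [Finset.sum_eq_single (⟨n-1, by omega⟩ : Fin n)]
  · rw [hA.1]; simp
  · intro b _ hb
    have hb' : (b:ℕ) < n - 1 := by
      have := b.isLt
      have : (b:ℕ) ≠ n - 1 := fun h => hb (by ext; simpa using h)
      omega
    rw [hA.2 b hb']; simp
  · simp

lemma mlam_B (n : ℕ) (hn : 2 ≤ n) (l : Fin n → ℤ) (hB : caseB n hn l) :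
    mlam n l = (-1:ℤ)^(n-1) := by
  rw [mlam]
  rw [Finset.sum_eq_single (⟨0, by omega⟩ : Fin n)]
  · rw [hB.1]; simp
  · intro b _ hb
    have hb' : 0 < (b:ℕ) := by
      rcases Nat.eq_zero_or_pos (b:ℕ) with h | h
      · exact absurd (by ext; simpa using h) hb
      · exact h
    rw [hB.2 b hb']; simp
  · simp

lemma mlam_zero (n : ℕ) (l : Fin n → ℤ)
    (h : ∀ i : Fin n, nu (lamb n ((n:ℤ)+1) l i) = 0) : mlam n l = 0 := by
  rw [mlam]
  apply Finset.sum_eq_zero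
  intro i _
  rw [h i]; simp

lemma mlam_pair (n : ℕ) (hn : 2 ≤ n) (l : Fin n → ℤ) (i : Fin n) (hi1 : (i:ℕ)+1 < n)
    (h1 : nu (lamb n ((n:ℤ)+1) l i) = 1)
    (h2 : nu (lamb n ((n:ℤ)+1) l ⟨(i:ℕ)+1, hi1⟩) = 1)
    (h0 : ∀ j : Fin n, j ≠ i → j ≠ ⟨(i:ℕ)+1, hi1⟩ → nu (lamb n ((n:ℤ)+1) l j) = 0) :
    mlam n l = 0 := by
  rw [mlam]
  have hne : i ≠ (⟨(i:ℕ)+1, hi1⟩ : Fin n) := by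
    intro h; have := congrArg Fin.val h; simp at this
  rw [← Finset.sum_subset (Finset.subset_univ {i, ⟨(i:ℕ)+1, hi1⟩})
    (by intro x _ hx
        simp only [Finset.mem_insert, Finset.mem_singleton] at hx
        push_neg at hx
        rw [h0 x hx.1 hx.2]; simp)]
  rw [Finset.sum_pair hne, h1, h2]
  simp only [Fin.val_mk, Nat.cast_one, mul_one]
  have e : n - 1 - (i:ℕ) = (n - 1 - ((i:ℕ)+1)) + 1 := by omega
  rw [e, pow_succ]
  ring

lemma key (n : ℕ) (hn : 2 ≤ n) (l : Fin n → ℤ) (hl : Antitone l) :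
    (∀ i : Fin n, nu (lamb n ((n:ℤ)+1) l i) = 0) ∨
    (∃ i : Fin n, ∃ hi1 : (i:ℕ)+1 < n,
      nu (lamb n ((n:ℤ)+1) l i) = 1 ∧ nu (lamb n ((n:ℤ)+1) l ⟨(i:ℕ)+1, hi1⟩) = 1 ∧
      ∀ j : Fin n, j ≠ i → j ≠ ⟨(i:ℕ)+1, hi1⟩ → nu (lamb n ((n:ℤ)+1) l j) = 0) ∨
    caseA n hn l ∨ caseB n hn l := by
  classical
  by_cases hex : ∃ i : Fin n, nu (lamb n ((n:ℤ)+1) l i) = 1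
  · obtain ⟨i₀, hi₀⟩ := hex
    set S : Finset (Fin n) := Finset.univ.filter (fun i => nu (lamb n ((n:ℤ)+1) l i) = 1) with hS
    have hne : S.Nonempty := ⟨i₀, by simp [hS, hi₀]⟩
    set i := S.min' hne with hidef
    have himem : nu (lamb n ((n:ℤ)+1) l i) = 1 := by
      have := S.min'_mem hne
      simpa [hS] using this
    have hmin : ∀ j : Fin n, nu (lamb n ((n:ℤ)+1) l j) = 1 → i ≤ j := by
      intro j hj
      exact S.min'_le j (by simp [hS, hj])
    by_cases hnb : ∃ hi1 : (i:ℕ)+1 < n, nu (lamb n ((n:ℤ)+1) l ⟨(i:ℕ)+1, hi1⟩) = 1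
    · obtain ⟨hi1, hnu1⟩ := hnb
      right; left
      refine ⟨i, hi1, himem, hnu1, ?_⟩
      intro j hj1 hj2
      rcases nu01 (lamb n ((n:ℤ)+1) l j) with h | h
      · exact h
      exfalso
      have hij : (i:ℕ) < (j:ℕ) := by
        have := hmin j h
        have h2 : (i:ℕ) ≤ (j:ℕ) := this
        rcases Nat.lt_or_ge (i:ℕ) (j:ℕ) with hc | hc
        · exact hc
        · exact absurd (by ext; omega : j = i) hj1
      have := F1 n hn l hl i j hij himem h
      exact hj2 (by ext; simpa using this)
    · have hsingle : ∀ j : Fin n, j ≠ i → nu (lamb n ((n:ℤ)+1) l j) = 0 := by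
        intro j hj
        rcases nu01 (lamb n ((n:ℤ)+1) l j) with h | h
        · exact h
        exfalso
        have hij : (i:ℕ) < (j:ℕ) := by
          have h2 : (i:ℕ) ≤ (j:ℕ) := hmin j h
          rcases Nat.lt_or_ge (i:ℕ) (j:ℕ) with hc | hc
          · exact hc
          · exact absurd (by ext; omega : j = i) hj
        have hval := F1 n hn l hl i j hij himem h
        have hjlt := j.isLt
        have hj' : j = ⟨(i:ℕ)+1, by omega⟩ := by ext; simpa using hval
        exact hnb ⟨by omega, by rw [← hj']; exact h⟩
      have hends : (i:ℕ) = 0 ∨ (i:ℕ) = n - 1 := by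
        by_contra hcon
        push_neg at hcon
        have h0 : 0 < (i:ℕ) := Nat.pos_of_ne_zero hcon.1
        have h1 : (i:ℕ) < n - 1 := by have := i.isLt; omega
        rcases F2 n hn l hl i h0 h1 himem with h | h
        · exact absurd h (by rw [hsingle ⟨(i:ℕ)-1, by omega⟩ (by intro hc; have := congrArg Fin.val hc; simp only [Fin.val_mk] at this; omega)]; simp)
        · exact absurd h (by rw [hsingle ⟨(i:ℕ)+1, by omega⟩ (by intro hc; have := congrArg Fin.val hc; simp only [Fin.val_mk] at this; omega)]; simp)
      rcases hends with h | h
      · right; right; right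
        constructor
        · have : (⟨0, by omega⟩ : Fin n) = i := by ext; simp [h]
          rw [this]; exact himem
        · intro j hj
          exact hsingle j (by intro hc; rw [hc] at hj; omega)
      · right; right; left
        constructor
        · have : (⟨n-1, by omega⟩ : Fin n) = i := by ext; simp [h]
          rw [this]; exact himem
        · intro j hj
          exact hsingle j (by intro hc; rw [hc] at hj; omega)
  · left
    intro i
    rcases nu01 (lamb n ((n:ℤ)+1) l i) with h | h
    · exact h
    · exact absurd ⟨i, h⟩ hex


/-- (`n ≥ 2`, `d = 2`, `u = n+1`, with `λ^i`, `ν`, and `m_λ` as above.)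
`m_λ ≠ 0` iff either case (a) (`ν_{λ^n} = 1`, all other `ν_{λ^j} = 0`), in which case
`m_λ = 1`, or case (b) (`ν_{λ^1} = 1`, all other `ν_{λ^j} = 0`), in which case
`m_λ = (-1)^{n-1}`.  Moreover case (a) holds iff `λ_{n-1} ≥ n`, `λ_i - n` is even for all
`i ≤ n-1`, and (`λ_n ≤ n-1` or `λ_n - n` is even); and case (b) holds iff `λ_n ≥ n+1`
and `λ_i - n - 1` is even for all `i`. -/
theorem stmt_11 (n : ℕ) (hn : 2 ≤ n) (l : Fin n → ℤ) (hl : Antitone l) :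
    (mlam n l ≠ 0 ↔ (caseA n hn l ∨ caseB n hn l)) ∧
    (caseA n hn l → mlam n l = 1) ∧
    (caseB n hn l → mlam n l = (-1 : ℤ) ^ (n - 1)) ∧
    (caseA n hn l ↔
      ((n : ℤ) ≤ l ⟨n - 2, by omega⟩ ∧
        (∀ i : Fin n, (i : ℕ) < n - 1 → Even (l i - n)) ∧
        (l ⟨n - 1, by omega⟩ ≤ (n : ℤ) - 1 ∨ Even (l ⟨n - 1, by omega⟩ - n)))) ∧
    (caseB n hn l ↔
      ((n : ℤ) + 1 ≤ l ⟨n - 1, by omega⟩ ∧ ∀ i : Fin n, Even (l i - n - 1))) := by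
  refine ⟨⟨?_, ?_⟩, mlam_A n hn l, mlam_B n hn l, A_iff n hn l hl, B_iff n hn l hl⟩
  · intro hne
    rcases key n hn l hl with h | ⟨i, hi1, h1, h2, h0⟩ | h | h
    · exact absurd (mlam_zero n l h) hne
    · exact absurd (mlam_pair n hn l i hi1 h1 h2 h0) hne
    · exact Or.inl h
    · exact Or.inr h
  · rintro (h | h)
    · rw [mlam_A n hn l h]; norm_num
    · rw [mlam_B n hn l h]
      exact pow_ne_zero _ (by norm_num)
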